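/- Every T-strongly bounded T-linear functional on L^2(T) is order continuous; that is, Ê ⊆ E* ∩ L_n(E, R(T)). -/

import Mathlib

/-!
Common setup.  `E` models the universal completion `E_u` of the `T`-universally
complete Riesz space `L¹(T)`: a Dedekind complete (conditionally complete)
`f`-algebra whose multiplicative unit `1 = e = Te` is a weak order unit.
`T : E → E` models the strictly positive conditional expectation operator,
`L1 ⊆ E` its natural domain `L¹(T)`, `L2 L1` the space `L²(T)` and `RT T` the
range `R(T)` of `T`.
-/

variable {E : Type*}

/-- The range `R(T)` of the conditional expectation operator. -/
def RT (T : E → E) : Set E := Set.range T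

/-- `L²(T) = {f ∈ L¹(T) : f² ∈ L¹(T)}`, the product taken in the `f`-algebra `E_u`. -/
def L2 [Mul E] (L1 : Set E) : Set E := {f | f ∈ L1 ∧ f * f ∈ L1}

variable [CommRing E] [ConditionallyCompleteLattice E]

/-- `T` is a strictly positive conditional expectation operator on the
`T`-universally complete space `L¹(T)` (modelled by the set `L1` inside the
Dedekind complete `f`-algebra `E`), with `1 = e = Te` a weak order unit. -/
structure IsCondExp (T : E → E) (L1 : Set E) : Prop where
  /-- compatibility of the order with addition -/
  addLe : ∀ a b c : E, a ≤ b → a + c ≤ b + c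
  /-- products of positive elements are positive -/
  mulPos : ∀ a b : E, 0 ≤ a → 0 ≤ b → 0 ≤ a * b
  /-- the `f`-algebra property -/
  fAlg : ∀ a b c : E, a ⊓ b = 0 → 0 ≤ c → (c * a) ⊓ b = 0
  /-- `1 = e` is a weak order unit -/
  weakUnit : ∀ x : E, 0 ≤ x → x ⊓ 1 = 0 → x = 0
  /-- `T` is additive -/
  addT : ∀ a b : E, T (a + b) = T a + T b
  /-- `T` is positive -/
  posT : ∀ a : E, 0 ≤ a → 0 ≤ T a
  /-- `T` is strictly positive -/
  strictT : ∀ a : E, 0 ≤ a → T a = 0 → a = 0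
  /-- `T` is a projection -/
  projT : ∀ a : E, T (T a) = T a
  /-- `T` maps the weak order unit `e = 1` to itself -/
  unitT : T 1 = 1
  /-- `T` is an averaging operator: `T(T a · b) = T a · T b` -/
  avgT : ∀ a b : E, T (T a * b) = T a * T b
  /-- `T` is order continuous -/
  ordContT : ∀ S : Set E, S.Nonempty → DirectedOn (· ≥ ·) S → (∀ x ∈ S, 0 ≤ x) →
      IsGLB S 0 → IsGLB (T '' S) 0
  /-- `L¹(T)` is closed under addition -/
  l1add : ∀ a ∈ L1, ∀ b ∈ L1, a + b ∈ L1
  /-- `L¹(T)` is solid -/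
  l1sol : ∀ a ∈ L1, ∀ b : E, |b| ≤ |a| → b ∈ L1
  /-- `R(T) ⊆ L¹(T)` and `T` maps `L¹(T)` into itself -/
  rtL1 : ∀ a : E, T a ∈ L1
  /-- `L²(T)` is an `R(T)`-module -/
  l2mod : ∀ α ∈ RT T, ∀ x ∈ L2 L1, α * x ∈ L2 L1
  /-- `T`-universal completeness of `L¹(T)` -/
  tuc : ∀ S : Set E, S.Nonempty → (∀ x ∈ S, 0 ≤ x ∧ x ∈ L1) → DirectedOn (· ≤ ·) S →
      BddAbove (T '' S) → BddAbove S ∧ sSup S ∈ L1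

/-- `sqrt` is a square-root function on the positive cone of the `f`-algebra. -/
def IsSqrt (sqrt : E → E) : Prop := ∀ a : E, 0 ≤ a → 0 ≤ sqrt a ∧ sqrt a * sqrt a = a

/-- The `R(T)`-valued norm `‖f‖_{T,2} = (T (f²))^{1/2}` on `L²(T)`. -/
def nrm (T : E → E) (sqrt : E → E) (f : E) : E := sqrt (T (f * f))

/-- A `T`-linear functional on `E = L²(T)`: `R(T)`-valued, additive,
`R(T)`-homogeneous and order bounded.  The set of these is the `T`-dual `E*`. -/
def TLinear (T : E → E) (L1 : Set E) (F : E → E) : Prop :=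
  (∀ x ∈ L2 L1, F x ∈ RT T) ∧
  (∀ x ∈ L2 L1, ∀ y ∈ L2 L1, F (x + y) = F x + F y) ∧
  (∀ α ∈ RT T, ∀ x ∈ L2 L1, F (α * x) = α * F x) ∧
  (∀ x ∈ L2 L1, 0 ≤ x → ∃ b : E, ∀ y ∈ L2 L1, |y| ≤ x → |F y| ≤ b)

/-- `T`-strong boundedness: `|F x| ≤ k ‖x‖_{T,2}` for some `k ∈ R(T)₊`. -/
def StronglyBdd (T : E → E) (L1 : Set E) (sqrt : E → E) (F : E → E) : Prop :=
  ∃ k ∈ RT T, 0 ≤ k ∧ ∀ x ∈ L2 L1, |F x| ≤ k * nrm T sqrt x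

/-- Membership in the `T`-strong dual `Ê` of `L²(T)`. -/
def MemEhat (T : E → E) (L1 : Set E) (sqrt : E → E) (F : E → E) : Prop :=
  TLinear T L1 F ∧ StronglyBdd T L1 sqrt F

/-- The Riesz representation map `Ψ(f)(g) = T (f g)`. -/
def Psi (T : E → E) (f : E) : E → E := fun g => T (f * g)

/-- The Riesz–Kantorovich set `{F y + G z : y, z ∈ L²(T)₊, y + z = x}` whose
supremum is `(F ∨ G)(x)` and whose infimum is `(F ∧ G)(x)`. -/
def RKset (L1 : Set E) (F G : E → E) (x : E) : Set E :=
  {v | ∃ y z : E, y ∈ L2 L1 ∧ z ∈ L2 L1 ∧ 0 ≤ y ∧ 0 ≤ z ∧ y + z = x ∧ v = F y + G z}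

/-- The partial order on functionals: `F ≤ G` iff `F x ≤ G x` for all `x ∈ L²(T)₊`. -/
def leF [Mul E] (L1 : Set E) (F G : E → E) : Prop := ∀ x ∈ L2 L1, 0 ≤ x → F x ≤ G x

namespace Stmt6Aux

variable {T : E → E} {L1 : Set E}

theorem alm (hT : IsCondExp T L1) : AddLeftMono E :=
  ⟨fun c a b h => by
    have := hT.addLe a b c h
    simpa [add_comm] using this⟩

theorem arm (hT : IsCondExp T L1) : AddRightMono E :=
  ⟨fun c a b h => hT.addLe a b c h⟩

/-- multiplication by a nonneg element is monotone -/
theorem mulmono (hT : IsCondExp T L1) {a b c : E} (ha : 0 ≤ a) (h : b ≤ c) :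
    a * b ≤ a * c := by
  haveI := alm hT; haveI := arm hT
  have h1 := hT.mulPos a (c - b) ha (sub_nonneg.2 h)
  rw [mul_sub] at h1
  exact sub_nonneg.1 h1

/-- disjoint elements have zero product -/
theorem djmul (hT : IsCondExp T L1) {a b : E} (ha : 0 ≤ a) (hb : 0 ≤ b)
    (hd : a ⊓ b = 0) : a * b = 0 := by
  have f1 : (a * b) ⊓ a = 0 := hT.fAlg b a a (by rw [inf_comm]; exact hd) ha
  have f2 : (b * a) ⊓ (a * b) = 0 :=
    hT.fAlg a (a * b) b (by rw [inf_comm]; exact f1) hb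
  calc a * b = (b * a) ⊓ (a * b) := by rw [mul_comm b a, inf_idem]
    _ = 0 := f2

/-- squares are nonnegative -/
theorem sqnn (hT : IsCondExp T L1) (a : E) : 0 ≤ a * a := by
  haveI := alm hT; haveI := arm hT
  have h1 : a⁺ - a⁻ = a := posPart_sub_negPart a
  have h2 : a⁺ ⊓ a⁻ = 0 := posPart_inf_negPart_eq_zero a
  have h3 : a⁺ * a⁻ = 0 := djmul hT (posPart_nonneg a) (negPart_nonneg a) h2
  have h4 : a * a = a⁺ * a⁺ + a⁻ * a⁻ := by
    linear_combination (-(a + a⁺ - a⁻)) * h1 - 2 * h3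
  rw [h4]
  exact add_nonneg (hT.mulPos _ _ (posPart_nonneg a) (posPart_nonneg a))
    (hT.mulPos _ _ (negPart_nonneg a) (negPart_nonneg a))

theorem onenn (hT : IsCondExp T L1) : (0 : E) ≤ 1 := by
  simpa using sqnn hT 1

theorem natnn (hT : IsCondExp T L1) (n : ℕ) : (0 : E) ≤ (n : E) := by
  haveI := alm hT; haveI := arm hT
  induction n with
  | zero => simp
  | succ m ih => push_cast; exact add_nonneg ih (onenn hT)

/-- Archimedean property -/
theorem arch (hT : IsCondExp T L1) {w z : E} (hw : 0 ≤ w) (h : ∀ m : ℕ, m • w ≤ z) :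
    w ≤ 0 := by
  haveI := alm hT; haveI := arm hT
  have hne : (Set.range fun m : ℕ => m • w).Nonempty := ⟨0 • w, 0, rfl⟩
  have hbdd : BddAbove (Set.range fun m : ℕ => m • w) := ⟨z, by rintro _ ⟨m, rfl⟩; exact h m⟩
  have hlub := isLUB_csSup hne hbdd
  have h2 : ∀ m : ℕ, m • w ≤ sSup (Set.range fun m : ℕ => m • w) - w := by
    intro m
    have : (m + 1) • w ≤ sSup (Set.range fun m : ℕ => m • w) := hlub.1 ⟨m + 1, rfl⟩
    rw [succ_nsmul] at this
    exact le_sub_iff_add_le.2 this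
  have h3 : sSup (Set.range fun m : ℕ => m • w) ≤ sSup (Set.range fun m : ℕ => m • w) - w :=
    hlub.2 (by rintro _ ⟨m, rfl⟩; exact h2 m)
  have h4 : sSup (Set.range fun m : ℕ => m • w) + w ≤ sSup (Set.range fun m : ℕ => m • w) :=
    le_sub_iff_add_le.1 h3
  exact (add_le_iff_nonpos_right _).1 h4

/-- scaled infima: if `S ↓ 0` is directed then any lower bound of `{n • x}` is `≤ 0` -/
theorem glbsmul (hT : IsCondExp T L1) {S : Set E} (hne : S.Nonempty)
    (hdir : DirectedOn (· ≥ ·) S) (hglb : IsGLB S 0) :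
    ∀ (n : ℕ) (c : E), (∀ x ∈ S, c ≤ n • x) → c ≤ 0 := by
  haveI := alm hT; haveI := arm hT
  intro n
  induction n with
  | zero =>
    intro c h
    obtain ⟨x, hx⟩ := hne
    simpa using h x hx
  | succ m ih =>
    intro c h
    have key : ∀ y ∈ S, c ≤ y := by
      intro y hy
      have h2 : c - y ≤ 0 := by
        apply ih
        intro x hx
        obtain ⟨z, hz, hzx, hzy⟩ := hdir x hx y hy
        have h3 : c ≤ (m + 1) • z := h z hz
        rw [succ_nsmul] at h3
        calc c - y ≤ (m • z + z) - y := by exact sub_le_sub_right h3 y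
          _ ≤ (m • z + y) - y := by
              have := add_le_add_right hzy (m • z); exact sub_le_sub_right this y
          _ = m • z := by ring
          _ ≤ m • x := nsmul_le_nsmul_right hzx m
      exact sub_nonpos.1 h2
    exact hglb.2 key

/-- nilpotent positives vanish -/
theorem nilp (hT : IsCondExp T L1) {p : E} (hp : 0 ≤ p) (hpp : p * p = 0) : p = 0 := by
  haveI := alm hT; haveI := arm hT
  have h1 : (0 : E) ≤ 1 := onenn hT
  set w := p ⊓ 1 with hwdef
  have hw0 : 0 ≤ w := le_inf hp h1
  have hwp : w ≤ p := inf_le_left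
  have hww : w * w = 0 := by
    apply le_antisymm _ (hT.mulPos _ _ hw0 hw0)
    calc w * w ≤ w * p := mulmono hT hw0 hwp
      _ = p * w := mul_comm _ _
      _ ≤ p * p := mulmono hT hp hwp
      _ = 0 := hpp
  have key : ∀ n : ℕ, n • w ≤ 1 := by
    intro n
    have hN := natnn hT n
    set N := (n : E) with hNdef
    have hNw : 0 ≤ N * w := hT.mulPos _ _ hN hw0
    set q := (N * w - 1)⁺ with hqdef
    have hqn : 0 ≤ q := posPart_nonneg _
    have hqle : q ≤ N * w := by
      calc q ≤ (N * w)⁺ := posPart_mono (sub_le_self _ h1)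
        _ = N * w := posPart_eq_self.2 hNw
    have hqw : q * w = 0 := by
      apply le_antisymm _ (hT.mulPos _ _ hqn hw0)
      calc q * w = w * q := mul_comm _ _
        _ ≤ w * (N * w) := mulmono hT hw0 hqle
        _ = 0 := by linear_combination N * hww
    have hq' : q * (N * w - 1)⁻ = 0 :=
      djmul hT hqn (negPart_nonneg _) (posPart_inf_negPart_eq_zero _)
    have hqq : q * q = -q := by
      have hd : q - (N * w - 1)⁻ = N * w - 1 := posPart_sub_negPart _
      linear_combination q * hd + N * hqw + hq'
    have hq0 : q = 0 := by
      apply le_antisymm _ hqn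
      have h5 : 0 ≤ q * q := hT.mulPos _ _ hqn hqn
      rw [hqq] at h5
      exact neg_nonneg.1 h5
    have h6 : N * w - 1 ≤ 0 := posPart_eq_zero.1 hq0
    rw [nsmul_eq_mul]
    exact sub_nonpos.1 h6
  have h7 : w ≤ 0 := arch hT hw0 key
  exact hT.weakUnit p hp (le_antisymm h7 hw0)

/-- square root comparison: `s² ≤ t²` implies `s ≤ t` for positives -/
theorem sqle (hT : IsCondExp T L1) {s t : E} (hs : 0 ≤ s) (ht : 0 ≤ t)
    (h : s * s ≤ t * t) : s ≤ t := by
  haveI := alm hT; haveI := arm hT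
  set p := (s - t)⁺ with hpdef
  set q := (s - t)⁻ with hqdef
  have hp0 : 0 ≤ p := posPart_nonneg _
  have hq0 : 0 ≤ q := negPart_nonneg _
  have hst : 0 ≤ s + t := add_nonneg hs ht
  have hd : p - q = s - t := posPart_sub_negPart _
  have hple : p ≤ s + t := by
    have h8 : s - t ≤ s + t := by
      rw [sub_le_iff_le_add]
      calc s ≤ s + (t + t) := le_add_of_nonneg_right (add_nonneg ht ht)
        _ = s + t + t := by ring
    rw [hpdef, posPart_def]
    exact sup_le h8 hst
  have h1 : p * (s + t) ≤ q * (s + t) := by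
    have h2 : 0 ≤ (q - p) * (s + t) := by
      have : (q - p) * (s + t) = t * t - s * s := by linear_combination (-(s + t)) * hd
      rw [this]
      exact sub_nonneg.2 h
    rw [sub_mul] at h2
    exact sub_nonneg.1 h2
  have hpq : p ⊓ q = 0 := posPart_inf_negPart_eq_zero _
  have f1 : ((s + t) * p) ⊓ q = 0 := hT.fAlg p q (s + t) hpq hst
  have f2 : ((s + t) * q) ⊓ ((s + t) * p) = 0 :=
    hT.fAlg q ((s + t) * p) (s + t) (by rw [inf_comm]; exact f1) hst
  have h3 : p * (s + t) = 0 := by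
    apply le_antisymm _ (hT.mulPos _ _ hp0 hst)
    calc p * (s + t) = (p * (s + t)) ⊓ (p * (s + t)) := (inf_idem _).symm
      _ ≤ (q * (s + t)) ⊓ (p * (s + t)) := inf_le_inf_right _ h1
      _ = 0 := by rw [mul_comm q, mul_comm p]; exact f2
  have h4 : p * p = 0 := by
    apply le_antisymm _ (hT.mulPos _ _ hp0 hp0)
    calc p * p ≤ p * (s + t) := mulmono hT hp0 hple
      _ = 0 := h3
  have h5 : p = 0 := nilp hT hp0 h4
  have h6 : s - t ≤ 0 := posPart_eq_zero.1 h5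
  exact sub_nonpos.1 h6

theorem Tmono (hT : IsCondExp T L1) {a b : E} (h : a ≤ b) : T a ≤ T b := by
  haveI := alm hT; haveI := arm hT
  have h1 : T b = T a + T (b - a) := by
    rw [← hT.addT]; congr 1; ring
  have h2 : 0 ≤ T (b - a) := hT.posT _ (sub_nonneg.2 h)
  calc T a ≤ T a + T (b - a) := le_add_of_nonneg_right h2
    _ = T b := h1.symm

theorem sqmono (hT : IsCondExp T L1) {a b : E} (ha : 0 ≤ a) (h : a ≤ b) :
    a * a ≤ b * b := by
  calc a * a ≤ a * b := mulmono hT ha h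
    _ = b * a := mul_comm _ _
    _ ≤ b * b := mulmono hT (le_trans ha h) h

theorem sqglb (hT : IsCondExp T L1) {S : Set E} (hne : S.Nonempty)
    (hpos : ∀ x ∈ S, 0 ≤ x) (hdir : DirectedOn (· ≥ ·) S) (hglb : IsGLB S 0)
    {x0 : E} (hx0 : 0 ≤ x0) (hub : ∀ x ∈ S, x ≤ x0) :
    IsGLB ((fun a => a * a) '' S) 0 := by
  haveI := alm hT; haveI := arm hT
  constructor
  · rintro _ ⟨x, hx, rfl⟩
    exact sqnn hT x
  · intro c hc
    set w := c ⊔ 0 with hwdef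
    have hw0 : 0 ≤ w := le_sup_right
    have hcw : c ≤ w := le_sup_left
    have hw : ∀ x ∈ S, w ≤ x * x := fun x hx => sup_le (hc ⟨x, hx, rfl⟩) (sqnn hT x)
    have key : ∀ m : ℕ, w ≤ x0 * (x0 - (m : E))⁺ := by
      intro m
      have hM := natnn hT m
      set r := (x0 - (m : E))⁺ with hrdef
      have hr0 : 0 ≤ r := posPart_nonneg _
      have step1 : ∀ x ∈ S, w ≤ x0 * r + m • x := by
        intro x hx
        have hxx0 : x ≤ x0 := hub x hx
        have hxpos := hpos x hx
        have e1 : x0 ≤ r + (m : E) := by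
          calc x0 = (x0 - (m : E)) + (m : E) := by ring
            _ ≤ r + (m : E) := add_le_add_left (le_posPart _) _
        calc w ≤ x * x := hw x hx
          _ ≤ x * x0 := mulmono hT hxpos hxx0
          _ ≤ x * (r + (m : E)) := mulmono hT hxpos e1
          _ = x * r + (m : E) * x := by ring
          _ ≤ x0 * r + (m : E) * x := by
              have h9 : x * r ≤ x0 * r := by
                calc x * r = r * x := mul_comm _ _
                  _ ≤ r * x0 := mulmono hT hr0 hxx0
                  _ = x0 * r := mul_comm _ _
              exact add_le_add_left h9 _
          _ = x0 * r + m • x := by rw [nsmul_eq_mul]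
      have step2 : w - x0 * r ≤ 0 := by
        apply glbsmul hT hne hdir hglb m
        intro x hx
        exact sub_le_iff_le_add.2 (by rw [add_comm]; exact step1 x hx)
      exact sub_nonpos.1 step2
    have key2 : ∀ m : ℕ, m • w ≤ x0 * (x0 * x0) := by
      intro m
      have hM := natnn hT m
      set r := (x0 - (m : E))⁺ with hrdef
      have hr0 : 0 ≤ r := posPart_nonneg _
      have hrx0 : r ≤ x0 := by
        calc r ≤ x0⁺ := posPart_mono (sub_le_self _ hM)
          _ = x0 := posPart_eq_self.2 hx0
      have hMr : (m : E) * r ≤ x0 * r := by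
        have hrr : r * (x0 - (m : E))⁻ = 0 :=
          djmul hT hr0 (negPart_nonneg _) (posPart_inf_negPart_eq_zero _)
        have hd : r - (x0 - (m : E))⁻ = x0 - (m : E) := posPart_sub_negPart _
        have h10 : x0 * r - (m : E) * r = r * r := by linear_combination (-r) * hd - hrr
        have h11 : 0 ≤ r * r := hT.mulPos _ _ hr0 hr0
        rw [← h10] at h11
        exact sub_nonneg.1 h11
      calc m • w = (m : E) * w := nsmul_eq_mul _ _
        _ ≤ (m : E) * (x0 * r) := mulmono hT hM (key m)
        _ = x0 * ((m : E) * r) := by ring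
        _ ≤ x0 * (x0 * r) := mulmono hT hx0 hMr
        _ ≤ x0 * (x0 * x0) := mulmono hT hx0 (mulmono hT hx0 hrx0)
    exact le_trans hcw (arch hT hw0 key2)

end Stmt6Aux

/-- Every `T`-strongly bounded `T`-linear functional `F ∈ Ê` is
order continuous: if `S ↓ 0` is a downward directed set of positives in `L²(T)`,
then the tail suprema of `|F|`-values exist and decrease to `0`. -/
theorem stmt6 (T : E → E) (L1 : Set E) (hT : IsCondExp T L1)
    (sqrt : E → E) (hsqrt : IsSqrt sqrt)
    (F : E → E) (hF : MemEhat T L1 sqrt F) :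
    ∀ S : Set E, S.Nonempty → S ⊆ L2 L1 → (∀ x ∈ S, 0 ≤ x) → DirectedOn (· ≥ ·) S →
      IsGLB S 0 →
      ∃ u : E → E,
        (∀ x ∈ S, IsLUB {v : E | ∃ y ∈ S, y ≤ x ∧ v = |F y|} (u x)) ∧
        IsGLB (u '' S) 0 := by
  intro S hne hSL2 hpos hdir hglb
  haveI := Stmt6Aux.alm hT; haveI := Stmt6Aux.arm hT
  obtain ⟨hlin, k, hkRT, hk0, hkb⟩ := hF
  set u : E → E := fun x => sSup {v : E | ∃ y ∈ S, y ≤ x ∧ v = |F y|} with hu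
  have part1 : ∀ x ∈ S, IsLUB {v : E | ∃ y ∈ S, y ≤ x ∧ v = |F y|} (u x) := by
    intro x hx
    have hne' : {v : E | ∃ y ∈ S, y ≤ x ∧ v = |F y|}.Nonempty := ⟨|F x|, x, hx, le_rfl, rfl⟩
    obtain ⟨b, hb⟩ := hlin.2.2.2 x (hSL2 hx) (hpos x hx)
    have hbdd : BddAbove {v : E | ∃ y ∈ S, y ≤ x ∧ v = |F y|} := by
      refine ⟨b, ?_⟩
      rintro v ⟨y, hyS, hyx, rfl⟩
      exact hb y (hSL2 hyS) (by rw [abs_of_nonneg (hpos y hyS)]; exact hyx)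
    exact isLUB_csSup hne' hbdd
  refine ⟨u, part1, ?_, ?_⟩
  · rintro _ ⟨x, hx, rfl⟩
    exact le_trans (abs_nonneg (F x)) ((part1 x hx).1 ⟨x, hx, le_rfl, rfl⟩)
  · intro c hc
    obtain ⟨x0, hx0S⟩ := hne
    have hx0 : 0 ≤ x0 := hpos x0 hx0S
    set S' := {x | x ∈ S ∧ x ≤ x0} with hS'def
    have hS'ne : S'.Nonempty := ⟨x0, hx0S, le_rfl⟩
    have hS'pos : ∀ x ∈ S', 0 ≤ x := fun x hx => hpos x hx.1
    have hS'dir : DirectedOn (· ≥ ·) S' := by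
      rintro x ⟨hxS, hxle⟩ y ⟨hyS, _⟩
      obtain ⟨z, hz, hzx, hzy⟩ := hdir x hxS y hyS
      exact ⟨z, ⟨hz, le_trans hzx hxle⟩, hzx, hzy⟩
    have hS'glb : IsGLB S' 0 := by
      constructor
      · exact fun x hx => hpos x hx.1
      · intro d hd
        apply hglb.2
        intro y hy
        obtain ⟨z, hz, hzy, hzx0⟩ := hdir y hy x0 hx0S
        exact le_trans (hd ⟨hz, hzx0⟩) hzy
    have hnrm : ∀ x : E, 0 ≤ x →
        0 ≤ nrm T sqrt x ∧ nrm T sqrt x * nrm T sqrt x = T (x * x) := by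
      intro x hxp
      exact hsqrt _ (hT.posT _ (hT.mulPos _ _ hxp hxp))
    have hnrmmono : ∀ x ∈ S, ∀ y ∈ S, y ≤ x → nrm T sqrt y ≤ nrm T sqrt x := by
      intro x hx y hy hyx
      obtain ⟨hy0, hyy⟩ := hnrm y (hpos y hy)
      obtain ⟨hx0', hxx⟩ := hnrm x (hpos x hx)
      apply Stmt6Aux.sqle hT hy0 hx0'
      rw [hyy, hxx]
      exact Stmt6Aux.Tmono hT (Stmt6Aux.sqmono hT (hpos y hy) hyx)
    have hcu : ∀ x ∈ S, c ≤ k * nrm T sqrt x := by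
      intro x hx
      have h2 : u x ≤ k * nrm T sqrt x := by
        apply (part1 x hx).2
        rintro v ⟨y, hyS, hyx, rfl⟩
        calc |F y| ≤ k * nrm T sqrt y := hkb y (hSL2 hyS)
          _ ≤ k * nrm T sqrt x := Stmt6Aux.mulmono hT hk0 (hnrmmono x hx y hyS hyx)
      exact le_trans (hc ⟨x, hx, rfl⟩) h2
    set w := c ⊔ 0 with hwdef
    have hw0 : 0 ≤ w := le_sup_right
    have hwkn : ∀ x ∈ S', w ≤ k * nrm T sqrt x := fun x hx =>
      sup_le (hcu x hx.1) (hT.mulPos _ _ hk0 (hnrm x (hS'pos x hx)).1)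
    have hsq : IsGLB ((fun a => a * a) '' S') 0 :=
      Stmt6Aux.sqglb hT hS'ne hS'pos hS'dir hS'glb hx0 (fun x hx => hx.2)
    have hsqne : ((fun a => a * a) '' S').Nonempty := hS'ne.image _
    have hsqpos : ∀ v ∈ (fun a => a * a) '' S', 0 ≤ v := by
      rintro _ ⟨x, hx, rfl⟩; exact Stmt6Aux.sqnn hT x
    have hsqdir : DirectedOn (· ≥ ·) ((fun a => a * a) '' S') := by
      rintro _ ⟨x, hx, rfl⟩ _ ⟨y, hy, rfl⟩
      obtain ⟨z, hz, hzx, hzy⟩ := hS'dir x hx y hy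
      exact ⟨z * z, ⟨z, hz, rfl⟩, Stmt6Aux.sqmono hT (hS'pos z hz) hzx,
        Stmt6Aux.sqmono hT (hS'pos z hz) hzy⟩
    have hD : IsGLB (T '' ((fun a => a * a) '' S')) 0 :=
      hT.ordContT _ hsqne hsqdir hsqpos hsq
    have hDne : (T '' ((fun a => a * a) '' S')).Nonempty := hsqne.image _
    have hDdir : DirectedOn (· ≥ ·) (T '' ((fun a => a * a) '' S')) := by
      rintro _ ⟨a, ha, rfl⟩ _ ⟨b, hb, rfl⟩
      obtain ⟨z, hz, hza, hzb⟩ := hsqdir a ha b hb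
      exact ⟨T z, ⟨z, hz, rfl⟩, Stmt6Aux.Tmono hT hza, Stmt6Aux.Tmono hT hzb⟩
    have key : ∀ m : ℕ, (2 * m) • w ≤ k * k := by
      intro m
      have h3 : ∀ d ∈ T '' ((fun a => a * a) '' S'), (2 * m) • w - k * k ≤ (m * m) • d := by
        rintro _ ⟨_, ⟨x, hx, rfl⟩, rfl⟩
        obtain ⟨hn0, hnn⟩ := hnrm x (hS'pos x hx)
        set n := nrm T sqrt x with hndef
        have h4 : (2 * m) • w ≤ (m * m) • T (x * x) + k * k := by
          calc (2 * m) • w = ((2 * m : ℕ) : E) * w := nsmul_eq_mul _ _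
            _ ≤ ((2 * m : ℕ) : E) * (k * n) :=
                Stmt6Aux.mulmono hT (Stmt6Aux.natnn hT _) (hwkn x hx)
            _ ≤ ((m * m : ℕ) : E) * T (x * x) + k * k := by
                rw [← hnn]
                push_cast
                have hsqnn := Stmt6Aux.sqnn hT ((m : E) * n - k)
                have he : (m : E) * (m : E) * (n * n) + k * k - 2 * (m : E) * (k * n) =
                    ((m : E) * n - k) * ((m : E) * n - k) := by ring
                rw [← he] at hsqnn
                exact sub_nonneg.1 hsqnn
            _ = (m * m) • T (x * x) + k * k := by rw [nsmul_eq_mul]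
        exact sub_le_iff_le_add.2 h4
      have h5 := Stmt6Aux.glbsmul hT hDne hDdir hD (m * m) _ h3
      exact sub_nonpos.1 h5
    have key2 : ∀ j : ℕ, j • w ≤ k * k := by
      intro j
      have hjw : 0 ≤ j • w := by
        rw [nsmul_eq_mul]; exact hT.mulPos _ _ (Stmt6Aux.natnn hT j) hw0
      have h7 : j • w ≤ (2 * j) • w := by
        have h8 : (2 * j) • w = j • w + j • w := by rw [two_mul, add_nsmul]
        rw [h8]
        exact le_add_of_nonneg_right hjw
      exact le_trans h7 (key j)
    exact le_trans le_sup_left (Stmt6Aux.arch hT hw0 key2)
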